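/- Let q ≥ 3 be an integer, F an alphabet of size q, and for integers 0 ≤ d ≤ n set r_{d,n} = max{0, min{⌈(d−1)/2⌉, ⌈(n−d−q+1)/(q−2)⌉}} and let S(d,n) = B(r_{d,n}; n−d+2r_{d,n}) × F^{d−2r_{d,n}}, where B(r;m) is the Hamming ball of radius r about a fixed center in F^m. Then for every δ ∈ [0,1], lim_{n→∞} (1/n) log_q |S(⌊δn⌋, n)| = β(δ), where β(δ) = H_q(δ/2) for δ ∈ [0, 2/q] and β(δ) = 1 − (1−δ) log_q(q−1) for δ ∈ [2/q, 1]. -/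

import Mathlib

open Filter Real Set

/-- The q-ary entropy function. -/
noncomputable def qEntropy (q : ℕ) (x : ℝ) : ℝ :=
  x * Real.logb q (((q : ℝ) - 1) / x) + (1 - x) * Real.logb q (1 / (1 - x))

/-- The function `β`. -/
noncomputable def betaFn (q : ℕ) (x : ℝ) : ℝ :=
  if x ≤ 2 / (q : ℝ) then qEntropy q (x / 2)
  else 1 - (1 - x) * Real.logb q ((q : ℝ) - 1)

/-- The radius `r_{d,n} = max{0, min{⌈(d-1)/2⌉, ⌈(n-d-q+1)/(q-2)⌉}}`. -/
noncomputable def rdn (q d n : ℕ) : ℕ :=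
  (min ⌈(((d : ℚ)) - 1) / 2⌉ ⌈(((n : ℚ)) - d - q + 1) / ((q : ℚ) - 2)⌉).toNat

/-- The cardinality of the Hamming ball `B(r; m)` of radius `r` in `F^m`
(centered at a fixed word, here the zero word). -/
noncomputable def ballCard (q m r : ℕ) [NeZero q] : ℕ :=
  (Finset.univ.filter (fun v : Fin m → Fin q => hammingNorm v ≤ r)).card

/-- The cardinality of the Ahlswede-Khachatrian anticode
`S(d,n) = B(r_{d,n}; n-d+2r_{d,n}) × F^{d-2r_{d,n}}`. -/
noncomputable def AKAnticodeCard (q d n : ℕ) [NeZero q] : ℕ :=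
  ballCard q (n - d + 2 * rdn q d n) (rdn q d n) * q ^ (d - 2 * rdn q d n)

/-! ### Auxiliary combinatorial lemmas -/

open Finset in
lemma AK.sphere_card (q m i : ℕ) [NeZero q] :
    (Finset.univ.filter fun v : Fin m → Fin q => hammingNorm v = i).card
      = m.choose i * (q - 1) ^ i := by
  have key : (Finset.univ.filter fun v : Fin m → Fin q => hammingNorm v = i)
      = (Finset.powersetCard i (univ : Finset (Fin m))).biUnion
          (fun s => Fintype.piFinset (fun j => if j ∈ s then (univ : Finset (Fin q)).erase 0 else {0})) := by
    ext v
    simp only [Finset.mem_filter, Finset.mem_univ, true_and, Finset.mem_biUnion,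
      Finset.mem_powersetCard, Finset.subset_univ, Fintype.mem_piFinset]
    constructor
    · intro hv
      refine ⟨univ.filter fun j => v j ≠ 0, hv, fun j => ?_⟩
      by_cases h : v j = 0 <;> simp [h]
    · rintro ⟨s, rfl, hs⟩
      rw [hammingNorm]
      congr 1
      ext j
      have := hs j
      by_cases h : j ∈ s <;> simp [h] at this ⊢ <;> simp [this]
  rw [key, card_biUnion]
  · rw [Finset.sum_congr rfl (g := fun _ => (q-1)^i), Finset.sum_const,
      Finset.card_powersetCard, card_univ, Fintype.card_fin, smul_eq_mul]
    intro s hs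
    rw [Fintype.card_piFinset]
    have : ∀ j, (if j ∈ s then (univ : Finset (Fin q)).erase 0 else {0}).card
        = if j ∈ s then q - 1 else 1 := by
      intro j; by_cases h : j ∈ s <;> simp [h, Finset.card_erase_of_mem]
    simp only [this]
    rw [Finset.prod_ite_mem, Finset.univ_inter, Finset.prod_const,
      (Finset.mem_powersetCard.1 hs).2]
  · intro s hs t ht hst
    rw [Function.onFun, Finset.disjoint_left]
    intro v hv hv'
    apply hst
    simp only [Fintype.mem_piFinset] at hv hv'
    ext j
    have h1 := hv j; have h2 := hv' j
    constructor <;> intro h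
    · by_contra h'
      simp [h] at h1; simp [h'] at h2; exact h1 (h2 ▸ rfl) |>.elim
    · by_contra h'
      simp [h] at h2; simp [h'] at h1; exact h2 (h1 ▸ rfl) |>.elim

open Finset in
lemma AK.ball_eq_sum (q m r : ℕ) [NeZero q] :
    ballCard q m r = ∑ i ∈ Finset.range (r+1), m.choose i * (q - 1) ^ i := by
  have key : (Finset.univ.filter (fun v : Fin m → Fin q => hammingNorm v ≤ r))
      = (Finset.range (r+1)).biUnion
          (fun i => Finset.univ.filter fun v : Fin m → Fin q => hammingNorm v = i) := by
    ext v
    simp [Nat.lt_succ_iff]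
  rw [ballCard, key, card_biUnion]
  · exact Finset.sum_congr rfl fun i _ => AK.sphere_card q m i
  · intro i _ j _ hij
    simp only [Finset.disjoint_left, Finset.mem_filter]
    intro v hv hv'
    exact hij (hv.2.symm.trans hv'.2)

lemma AK.t_sum (m r : ℕ) (hr : r ≤ m) :
    ∑ i ∈ Finset.range (m+1), m.choose i * (r^i * (m-r)^(m-i)) = m^m := by
  have h := add_pow r (m-r) m
  rw [Nat.add_sub_cancel' hr] at h
  rw [h]
  apply Finset.sum_congr rfl
  intro i _
  push_cast
  ring

lemma AK.t_step_up (m r i : ℕ) (hr : r ≤ m) (hi : i < r) :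
    m.choose i * (r^i * (m-r)^(m-i)) ≤ m.choose (i+1) * (r^(i+1) * (m-r)^(m-(i+1))) := by
  have h1 : m - i = (m - (i+1)) + 1 := by omega
  refine Nat.le_of_mul_le_mul_left ?_ (Nat.succ_pos i)
  have hc : m.choose (i+1) * (i+1) = m.choose i * (m - i) := Nat.choose_succ_right_eq m i
  calc (i+1) * (m.choose i * (r^i * (m-r)^(m-i)))
      = m.choose i * r^i * ((i+1) * (m-r)) * (m-r)^(m-(i+1)) := by rw [h1]; ring
    _ ≤ m.choose i * r^i * (r * (m-i)) * (m-r)^(m-(i+1)) := by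
        apply Nat.mul_le_mul_right
        apply Nat.mul_le_mul_left
        exact Nat.mul_le_mul (by omega) (by omega)
    _ = (m.choose i * (m-i)) * (r^(i+1) * (m-r)^(m-(i+1))) := by ring
    _ = (i+1) * (m.choose (i+1) * (r^(i+1) * (m-r)^(m-(i+1)))) := by rw [← hc]; ring

lemma AK.t_step_down (m r i : ℕ) (hr : r ≤ i) (hi : i < m) :
    m.choose (i+1) * (r^(i+1) * (m-r)^(m-(i+1))) ≤ m.choose i * (r^i * (m-r)^(m-i)) := by
  have h1 : m - i = (m - (i+1)) + 1 := by omega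
  refine Nat.le_of_mul_le_mul_left ?_ (Nat.succ_pos i)
  have hc : m.choose (i+1) * (i+1) = m.choose i * (m - i) := Nat.choose_succ_right_eq m i
  calc (i+1) * (m.choose (i+1) * (r^(i+1) * (m-r)^(m-(i+1))))
      = (m.choose (i+1) * (i+1)) * (r^(i+1) * (m-r)^(m-(i+1))) := by ring
    _ = m.choose i * r^i * (r * (m-i)) * (m-r)^(m-(i+1)) := by rw [hc]; ring
    _ ≤ m.choose i * r^i * ((i+1) * (m-r)) * (m-r)^(m-(i+1)) := by
        apply Nat.mul_le_mul_right
        apply Nat.mul_le_mul_left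
        exact Nat.mul_le_mul (by omega) (by omega)
    _ = (i+1) * (m.choose i * (r^i * (m-r)^(m-i))) := by rw [h1]; ring

lemma AK.t_max (m r : ℕ) (hr : r ≤ m) :
    ∀ i, m.choose i * (r^i * (m-r)^(m-i)) ≤ m.choose r * (r^r * (m-r)^(m-r)) := by
  have up : ∀ j, m.choose (r-j) * (r^(r-j) * (m-r)^(m-(r-j)))
      ≤ m.choose r * (r^r * (m-r)^(m-r)) := by
    intro j
    induction j with
    | zero => simp
    | succ k ih =>
      by_cases h : k + 1 ≤ r
      · have h2 : r - (k+1) + 1 = r - k := by omega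
        calc m.choose (r-(k+1)) * (r^(r-(k+1)) * (m-r)^(m-(r-(k+1))))
            ≤ m.choose (r-(k+1)+1) * (r^(r-(k+1)+1) * (m-r)^(m-(r-(k+1)+1))) :=
              AK.t_step_up m r _ hr (by omega)
          _ = m.choose (r-k) * (r^(r-k) * (m-r)^(m-(r-k))) := by rw [h2]
          _ ≤ _ := ih
      · have : r - (k+1) = r - k := by omega
        rw [this]; exact ih
  have down : ∀ j, r + j ≤ m → m.choose (r+j) * (r^(r+j) * (m-r)^(m-(r+j)))
      ≤ m.choose r * (r^r * (m-r)^(m-r)) := by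
    intro j
    induction j with
    | zero => simp
    | succ k ih =>
      intro hj
      calc m.choose (r+(k+1)) * (r^(r+(k+1)) * (m-r)^(m-(r+(k+1))))
          = m.choose ((r+k)+1) * (r^((r+k)+1) * (m-r)^(m-((r+k)+1))) := by ring_nf
        _ ≤ m.choose (r+k) * (r^(r+k) * (m-r)^(m-(r+k))) :=
            AK.t_step_down m r _ (by omega) (by omega)
        _ ≤ _ := ih (by omega)
  intro i
  rcases le_or_gt i r with h | h
  · have : i = r - (r - i) := by omega
    rw [this]; exact up _
  · by_cases hi : i ≤ m
    · have : i = r + (i - r) := by omega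
      rw [this]; exact down _ (by omega)
    · rw [Nat.choose_eq_zero_of_lt (by omega)]; simp

lemma AK.ball_lower (q m r : ℕ) [NeZero q] (hr : r ≤ m) :
    (q-1)^r * m^m ≤ (m+1) * (ballCard q m r * (r^r * (m-r)^(m-r))) := by
  have h1 : m^m ≤ (m+1) * (m.choose r * (r^r * (m-r)^(m-r))) := by
    rw [← AK.t_sum m r hr]
    calc ∑ i ∈ Finset.range (m+1), m.choose i * (r^i * (m-r)^(m-i))
        ≤ (Finset.range (m+1)).card • (m.choose r * (r^r * (m-r)^(m-r))) :=
          Finset.sum_le_card_nsmul _ _ _ (fun i _ => AK.t_max m r hr i)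
      _ = (m+1) * (m.choose r * (r^r * (m-r)^(m-r))) := by simp [Finset.card_range]
  have h2 : m.choose r * (q-1)^r ≤ ballCard q m r := by
    rw [AK.ball_eq_sum]
    exact Finset.single_le_sum (f := fun i => m.choose i * (q-1)^i)
      (fun i _ => Nat.zero_le _) (Finset.self_mem_range_succ r)
  calc (q-1)^r * m^m ≤ (q-1)^r * ((m+1) * (m.choose r * (r^r * (m-r)^(m-r)))) :=
        Nat.mul_le_mul_left _ h1
    _ = (m+1) * ((m.choose r * (q-1)^r) * (r^r * (m-r)^(m-r))) := by ring
    _ ≤ (m+1) * (ballCard q m r * (r^r * (m-r)^(m-r))) := by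
        apply Nat.mul_le_mul_left
        exact Nat.mul_le_mul_right _ h2

lemma AK.ball_upper (q m r : ℕ) [NeZero q] (hr : r ≤ m) (hqr : r ≤ (q-1) * (m-r)) :
    ballCard q m r * (r^r * (m-r)^(m-r)) ≤ (r+1) * ((q-1)^r * m^m) := by
  rw [AK.ball_eq_sum, Finset.sum_mul]
  calc ∑ i ∈ Finset.range (r+1), m.choose i * (q-1)^i * (r^r * (m-r)^(m-r))
      ≤ (Finset.range (r+1)).card • ((q-1)^r * m^m) := by
        apply Finset.sum_le_card_nsmul
        intro i hi
        rw [Finset.mem_range, Nat.lt_succ_iff] at hi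
        have e1 : r^r = r^i * r^(r-i) := by rw [← pow_add]; congr 1; omega
        have e2 : (q-1)^r = (q-1)^i * (q-1)^(r-i) := by rw [← pow_add]; congr 1; omega
        have e3 : (m-r)^(m-i) = (m-r)^(m-r) * (m-r)^(r-i) := by
          rw [← pow_add]; congr 1; omega
        have key : r^(r-i) ≤ ((q-1) * (m-r))^(r-i) := Nat.pow_le_pow_left hqr _
        have ht : m.choose i * (r^i * (m-r)^(m-i)) ≤ m^m := by
          rw [← AK.t_sum m r hr]
          exact Finset.single_le_sum (f := fun i => m.choose i * (r^i * (m-r)^(m-i)))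
            (fun i _ => Nat.zero_le _) (by simp only [Finset.mem_range]; omega)
        calc m.choose i * (q-1)^i * (r^r * (m-r)^(m-r))
            = (q-1)^i * r^(r-i) * (m.choose i * (r^i * (m-r)^(m-r))) := by rw [e1]; ring
          _ ≤ (q-1)^i * ((q-1)*(m-r))^(r-i) * (m.choose i * (r^i * (m-r)^(m-r))) := by
              apply Nat.mul_le_mul_right
              exact Nat.mul_le_mul_left _ key
          _ = (q-1)^r * (m.choose i * (r^i * (m-r)^(m-i))) := by
              rw [e2, e3, mul_pow]; ring
          _ ≤ (q-1)^r * m^m := Nat.mul_le_mul_left _ ht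
    _ = (r+1) * ((q-1)^r * m^m) := by simp [Finset.card_range]

lemma AK.ballCard_one_le (q m r : ℕ) [NeZero q] : 1 ≤ ballCard q m r := by
  refine Finset.card_pos.2 ⟨0, ?_⟩
  simp [hammingNorm]

lemma AK.ballCard_zero (q m : ℕ) [NeZero q] : ballCard q m 0 = 1 := by
  rw [AK.ball_eq_sum]
  simp

/-! ### Analytic auxiliary lemmas -/

lemma AK.tendsto_logb_comp {u : ℕ → ℝ} {a : ℝ} (c : ℝ) (h : Filter.Tendsto u atTop (nhds a))
    (ha : 0 < a) :
    Filter.Tendsto (fun n => Real.logb c (u n)) atTop (nhds (Real.logb c a)) := by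
  have h2 := ((Real.continuousAt_log ha.ne').tendsto.comp h).div_const (Real.log c)
  simpa [Real.logb, Function.comp] using h2

lemma AK.tendsto_logb_nat_div (q : ℕ) :
    Filter.Tendsto (fun n : ℕ => Real.logb q n / n) atTop (nhds 0) := by
  have h2 : Filter.Tendsto (fun n : ℕ => Real.log n / n) atTop (nhds 0) :=
    Real.isLittleO_log_id_atTop.tendsto_div_nhds_zero.comp tendsto_natCast_atTop_atTop
  have h3 := h2.div_const (Real.log q)
  rw [zero_div] at h3
  refine h3.congr fun n => ?_
  rw [Real.logb]
  ring

lemma AK.tendsto_logb_div_of_le (q : ℕ) (hq : 1 < (q : ℝ)) (a : ℕ → ℕ)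
    (h1 : ∀ᶠ n in atTop, 1 ≤ a n) (h4 : ∀ᶠ n in atTop, a n ≤ 4 * n) :
    Filter.Tendsto (fun n : ℕ => Real.logb q (a n) / n) atTop (nhds 0) := by
  have hupper : Filter.Tendsto (fun n : ℕ => (Real.logb q 4 + Real.logb q n) / n)
      atTop (nhds 0) := by
    have := (tendsto_const_div_atTop_nhds_zero_nat (Real.logb q 4)).add
      (AK.tendsto_logb_nat_div q)
    rw [add_zero] at this
    refine this.congr fun n => ?_
    ring
  refine tendsto_of_tendsto_of_tendsto_of_le_of_le' tendsto_const_nhds hupper ?_ ?_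
  · filter_upwards [h1] with n hn
    exact div_nonneg (Real.logb_nonneg hq (by exact_mod_cast hn)) (Nat.cast_nonneg n)
  · filter_upwards [h1, h4, Filter.eventually_ge_atTop 1] with n hn h4n hn1
    have hne : ((n:ℝ)) ≠ 0 := by
      exact Nat.cast_ne_zero.2 (by omega)
    have hnum : Real.logb q (a n) ≤ Real.logb q 4 + Real.logb q n := by
      calc Real.logb q (a n) ≤ Real.logb q (4 * n) :=
            Real.logb_le_logb_of_le hq (by exact_mod_cast hn) (by exact_mod_cast h4n)
        _ = Real.logb q 4 + Real.logb q n := Real.logb_mul (by norm_num) hne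
    gcongr

lemma AK.logb_ball_bounds (q m r : ℕ) [NeZero q] (hq : 3 ≤ q) (hr : r ≤ m)
    (hr1 : 1 ≤ r) (hmr : 1 ≤ m - r) (hqr : r ≤ (q-1)*(m-r)) :
    (r:ℝ) * Real.logb q ((q:ℝ)-1) + m * Real.logb q m - r * Real.logb q r
      - ((m:ℝ)-r) * Real.logb q ((m:ℝ)-r) - Real.logb q ((m:ℝ)+1)
      ≤ Real.logb q (ballCard q m r)
    ∧ Real.logb q (ballCard q m r)
      ≤ (r:ℝ) * Real.logb q ((q:ℝ)-1) + m * Real.logb q m - r * Real.logb q r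
      - ((m:ℝ)-r) * Real.logb q ((m:ℝ)-r) + Real.logb q ((r:ℝ)+1) := by
  have hq1 : (1:ℝ) < q := by exact_mod_cast (by omega : 1 < q)
  have hq3 : (3:ℝ) ≤ q := by exact_mod_cast hq
  have hr1' : (1:ℝ) ≤ r := by exact_mod_cast hr1
  have hm1 : (1:ℝ) ≤ m := by exact_mod_cast hr1.trans hr
  have hmr1 : (1:ℝ) ≤ (m:ℝ) - r := by
    have := (Nat.cast_le (α := ℝ)).2 hmr
    rwa [Nat.cast_sub hr, Nat.cast_one] at this
  have hQ : (0:ℝ) < (q:ℝ)-1 := by linarith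
  have hM : (0:ℝ) < (m:ℝ) := by linarith
  have hR : (0:ℝ) < (r:ℝ) := by linarith
  have hMR : (0:ℝ) < (m:ℝ)-r := by linarith
  have hB1 : (1:ℝ) ≤ (ballCard q m r : ℝ) := by exact_mod_cast AK.ballCard_one_le q m r
  have hB : (0:ℝ) < (ballCard q m r : ℝ) := by linarith
  set B := ballCard q m r with hBdef
  have h1' : ((q:ℝ)-1)^r * (m:ℝ)^m ≤ ((m:ℝ)+1) * ((B:ℝ) * ((r:ℝ)^r * ((m:ℝ)-(r:ℝ))^(m-r))) := by
    have := (Nat.cast_le (α := ℝ)).2 (AK.ball_lower q m r hr)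
    push_cast [Nat.cast_sub hr, Nat.cast_sub (show 1 ≤ q by omega)] at this
    convert this using 2 <;> ring
  have h2' : (B:ℝ) * ((r:ℝ)^r * ((m:ℝ)-(r:ℝ))^(m-r)) ≤ ((r:ℝ)+1) * (((q:ℝ)-1)^r * (m:ℝ)^m) := by
    have := (Nat.cast_le (α := ℝ)).2 (AK.ball_upper q m r hr hqr)
    push_cast [Nat.cast_sub hr, Nat.cast_sub (show 1 ≤ q by omega)] at this
    convert this using 2 <;> ring
  have hcast : ((m - r : ℕ) : ℝ) = (m:ℝ) - r := by rw [Nat.cast_sub hr]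
  have hpos1 : (0:ℝ) < ((q:ℝ)-1)^r * (m:ℝ)^m := by positivity
  have hpos2 : (0:ℝ) < (B:ℝ) * ((r:ℝ)^r * ((m:ℝ)-(r:ℝ))^(m-r)) := by positivity
  have lw := Real.logb_le_logb_of_le hq1 hpos1 h1'
  have up := Real.logb_le_logb_of_le hq1 hpos2 h2'
  have e1 : Real.logb q (((q:ℝ)-1)^r * (m:ℝ)^m)
      = r * Real.logb q ((q:ℝ)-1) + m * Real.logb q m := by
    rw [Real.logb_mul (by positivity) (by positivity), Real.logb_pow, Real.logb_pow]
  have e2 : Real.logb q ((B:ℝ) * ((r:ℝ)^r * ((m:ℝ)-(r:ℝ))^(m-r)))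
      = Real.logb q (B:ℝ) + r * Real.logb q r + ((m:ℝ)-r) * Real.logb q ((m:ℝ)-r) := by
    rw [Real.logb_mul (by positivity) (by positivity),
      Real.logb_mul (by positivity) (by positivity), Real.logb_pow, Real.logb_pow, hcast]
    ring
  have e3 : Real.logb q (((m:ℝ)+1) * ((B:ℝ) * ((r:ℝ)^r * ((m:ℝ)-(r:ℝ))^(m-r))))
      = Real.logb q ((m:ℝ)+1) + (Real.logb q (B:ℝ) + r * Real.logb q r
        + ((m:ℝ)-r) * Real.logb q ((m:ℝ)-r)) := by
    rw [Real.logb_mul (by positivity) (by positivity), e2]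
  have e4 : Real.logb q (((r:ℝ)+1) * (((q:ℝ)-1)^r * (m:ℝ)^m))
      = Real.logb q ((r:ℝ)+1) + (r * Real.logb q ((q:ℝ)-1) + m * Real.logb q m) := by
    rw [Real.logb_mul (by positivity) (by positivity), e1]
  rw [e1, e3] at lw
  rw [e2, e4] at up
  constructor
  · linarith
  · linarith

lemma AK.beta_eq (q : ℕ) (hq : 3 ≤ q) (δ : ℝ) (h0 : 0 < δ) (h1 : δ < 1)
    (ρ μ ν : ℝ) (hρ : ρ = min (δ/2) ((1-δ)/((q:ℝ)-2)))
    (hμ : μ = 1 - δ + 2*ρ) (hν : ν = 1 - δ + ρ) :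
    betaFn q δ = ρ * Real.logb q ((q:ℝ)-1) + μ * Real.logb q μ - ρ * Real.logb q ρ
      - ν * Real.logb q ν + (δ - 2*ρ) := by
  have hq1 : (1:ℝ) < q := by exact_mod_cast (by omega : 1 < q)
  have hq3 : (3:ℝ) ≤ q := by exact_mod_cast hq
  have hq2 : (0:ℝ) < (q:ℝ) - 2 := by linarith
  have hQ : (0:ℝ) < (q:ℝ) - 1 := by linarith
  by_cases hc : δ ≤ 2 / (q:ℝ)
  · have hδq : δ * q ≤ 2 := by
      rw [le_div_iff₀ (by linarith : (0:ℝ) < q)] at hc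
      linarith
    have hmin : ρ = δ / 2 := by
      rw [hρ, min_eq_left]
      rw [div_le_div_iff₀ (by norm_num) hq2]
      linarith
    subst hmin
    rw [betaFn, if_pos hc, qEntropy]
    have hμ1 : μ = 1 := by rw [hμ]; ring
    have hν1 : ν = 1 - δ/2 := by rw [hν]; ring
    rw [hμ1, hν1, Real.logb_one]
    rw [Real.logb_div (by linarith) (by positivity), one_div, Real.logb_inv]
    ring
  · push_neg at hc
    have hδq : 2 < δ * q := by
      rw [div_lt_iff₀ (by linarith : (0:ℝ) < q)] at hc
      linarith
    have hmin : ρ = (1-δ)/((q:ℝ)-2) := by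
      rw [hρ, min_eq_right]
      rw [div_le_div_iff₀ hq2 (by norm_num)]
      linarith
    have hρpos : 0 < ρ := by rw [hmin]; exact div_pos (by linarith) hq2
    have h1δ : ((q:ℝ)-2) * ρ = 1 - δ := by rw [hmin]; field_simp
    have hμq : μ = (q:ℝ) * ρ := by rw [hμ]; linarith
    have hνq : ν = ((q:ℝ)-1) * ρ := by rw [hν]; linarith
    rw [betaFn, if_neg (not_le.2 hc), hμq, hνq]
    rw [Real.logb_mul (by linarith : (q:ℝ) ≠ 0) (ne_of_gt hρpos),
      Real.logb_mul (ne_of_gt hQ) (ne_of_gt hρpos), Real.logb_self_eq_one hq1]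
    linear_combination (Real.logb q ((q:ℝ)-1) - 1) * h1δ

lemma AK.rdn_two_mul_le (q d n : ℕ) : 2 * rdn q d n ≤ d := by
  have h : rdn q d n ≤ (⌈(((d:ℚ)) - 1) / 2⌉).toNat :=
    Int.toNat_le_toNat (min_le_left _ _)
  rcases Nat.even_or_odd d with ⟨k, hk⟩ | ⟨k, hk⟩
  · have hc : ⌈(((d:ℚ)) - 1) / 2⌉ = (k:ℤ) := by
      rw [Int.ceil_eq_iff]
      subst hk
      push_cast
      constructor
      · rw [lt_div_iff₀ (by norm_num : (0:ℚ) < 2)]; ring_nf; linarith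
      · rw [div_le_iff₀ (by norm_num : (0:ℚ) < 2)]; ring_nf; linarith
    rw [hc, Int.toNat_natCast] at h
    omega
  · have hc : ⌈(((d:ℚ)) - 1) / 2⌉ = (k:ℤ) := by
      have e : (((d:ℚ)) - 1) / 2 = (k:ℚ) := by subst hk; push_cast; ring
      rw [e, Int.ceil_natCast]
    rw [hc, Int.toNat_natCast] at h
    omega

lemma AK.rdn_div_tendsto (q : ℕ) (hq : 3 ≤ q) (δ : ℝ) (h0 : 0 < δ) (h1 : δ < 1) :
    Filter.Tendsto (fun n : ℕ => ((rdn q ⌊δ * n⌋₊ n : ℕ):ℝ)/n) atTop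
      (nhds (min (δ/2) ((1-δ)/((q:ℝ)-2)))) := by
  have hq1 : (1:ℝ) < q := by exact_mod_cast (by omega : 1 < q)
  have hq3 : (3:ℝ) ≤ q := by exact_mod_cast hq
  have hq2 : (0:ℝ) < (q:ℝ) - 2 := by linarith
  set ρ := min (δ/2) ((1-δ)/((q:ℝ)-2)) with hρdef
  have hρpos : 0 < ρ := lt_min (by linarith) (div_pos (by linarith) hq2)
  set a : ℕ → ℝ := fun n => ((⌊δ * n⌋₊ : ℝ) - 1)/2 with hadef
  set b : ℕ → ℝ := fun n => ((n:ℝ) - ⌊δ * n⌋₊ - q + 1)/((q:ℝ)-2) with hbdef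
  -- limits of a n / n and b n / n
  have hD : Filter.Tendsto (fun n : ℕ => ((⌊δ * n⌋₊ : ℕ):ℝ)/n) atTop (nhds δ) :=
    (tendsto_nat_floor_mul_div_atTop h0.le).comp tendsto_natCast_atTop_atTop
  have hinv : Filter.Tendsto (fun n : ℕ => (1:ℝ)/n) atTop (nhds 0) :=
    tendsto_one_div_atTop_nhds_zero_nat
  have hnn : Filter.Tendsto (fun n : ℕ => (n:ℝ)/n) atTop (nhds 1) := by
    refine Filter.Tendsto.congr' ?_ tendsto_const_nhds
    filter_upwards [Filter.eventually_ge_atTop 1] with n hn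
    rw [div_self (by exact_mod_cast Nat.one_le_cast.2 hn |>.trans_lt' one_pos |>.ne' : (n:ℝ) ≠ 0)]
  have ha : Filter.Tendsto (fun n : ℕ => a n / n) atTop (nhds (δ/2)) := by
    have := ((hD.sub hinv).div_const 2)
    rw [sub_zero] at this
    refine this.congr fun n => ?_
    simp only [hadef]
    ring
  have hb : Filter.Tendsto (fun n : ℕ => b n / n) atTop (nhds ((1-δ)/((q:ℝ)-2))) := by
    have := (((hnn.sub hD).sub (hinv.const_mul (q:ℝ))).add hinv).div_const ((q:ℝ)-2)
    rw [mul_zero, sub_zero, add_zero] at this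
    refine this.congr fun n => ?_
    simp only [hbdef]
    ring
  have hmin : Filter.Tendsto (fun n : ℕ => min (a n) (b n) / n) atTop (nhds ρ) := by
    refine (ha.min hb).congr fun n => ?_
    exact min_div_div_right (Nat.cast_nonneg n) _ _
  -- pointwise bounds
  have low : ∀ n : ℕ, min (a n) (b n) ≤ ((rdn q ⌊δ * n⌋₊ n : ℕ):ℝ) := by
    intro n
    set d := ⌊δ * n⌋₊ with hd
    have hA : a n ≤ ((⌈(((d : ℚ)) - 1) / 2⌉ : ℤ) : ℝ) := by
      have h := Int.le_ceil (((((d : ℚ)) - 1) / 2 : ℚ) : ℝ)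
      rw [Rat.ceil_cast] at h
      refine le_trans (le_of_eq ?_) h
      push_cast
      ring
    have hB : b n ≤ ((⌈(((n : ℚ)) - d - q + 1) / ((q : ℚ) - 2)⌉ : ℤ) : ℝ) := by
      have h := Int.le_ceil ((((((n : ℚ)) - d - q + 1) / ((q : ℚ) - 2)) : ℚ) : ℝ)
      rw [Rat.ceil_cast] at h
      refine le_trans (le_of_eq ?_) h
      push_cast
      ring
    calc min (a n) (b n)
        ≤ min ((⌈(((d : ℚ)) - 1) / 2⌉ : ℤ) : ℝ)
            ((⌈(((n : ℚ)) - d - q + 1) / ((q : ℚ) - 2)⌉ : ℤ) : ℝ) := min_le_min hA hB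
      _ = ((min ⌈(((d : ℚ)) - 1) / 2⌉ ⌈(((n : ℚ)) - d - q + 1) / ((q : ℚ) - 2)⌉ : ℤ) : ℝ) := by
          rw [Int.cast_min]
      _ ≤ ((rdn q d n : ℕ) : ℝ) := by
          rw [rdn]
          exact_mod_cast Int.self_le_toNat _
  have high : ∀ n : ℕ, ((rdn q ⌊δ * n⌋₊ n : ℕ):ℝ) ≤ max (min (a n) (b n) + 1) 0 := by
    intro n
    set d := ⌊δ * n⌋₊ with hd
    have hA : ((⌈(((d : ℚ)) - 1) / 2⌉ : ℤ) : ℝ) ≤ a n + 1 := by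
      have h := (Int.ceil_lt_add_one (((((d : ℚ)) - 1) / 2 : ℚ) : ℝ)).le
      rw [Rat.ceil_cast] at h
      refine h.trans (le_of_eq ?_)
      push_cast
      ring
    have hB : ((⌈(((n : ℚ)) - d - q + 1) / ((q : ℚ) - 2)⌉ : ℤ) : ℝ) ≤ b n + 1 := by
      have h := (Int.ceil_lt_add_one ((((((n : ℚ)) - d - q + 1) / ((q : ℚ) - 2)) : ℚ) : ℝ)).le
      rw [Rat.ceil_cast] at h
      refine h.trans (le_of_eq ?_)
      push_cast
      ring
    have e : ((rdn q d n : ℕ) : ℝ)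
        = max ((min ⌈(((d : ℚ)) - 1) / 2⌉ ⌈(((n : ℚ)) - d - q + 1) / ((q : ℚ) - 2)⌉ : ℤ) : ℝ) 0 := by
      rw [rdn]
      have := Int.toNat_eq_max (min ⌈(((d : ℚ)) - 1) / 2⌉ ⌈(((n : ℚ)) - d - q + 1) / ((q : ℚ) - 2)⌉)
      exact_mod_cast congrArg (Int.cast : ℤ → ℝ) this
    rw [e]
    refine max_le_max ?_ le_rfl
    rw [Int.cast_min]
    calc min ((⌈(((d : ℚ)) - 1) / 2⌉ : ℤ) : ℝ) ((⌈(((n : ℚ)) - d - q + 1) / ((q : ℚ) - 2)⌉ : ℤ) : ℝ)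
        ≤ min (a n + 1) (b n + 1) := min_le_min hA hB
      _ = min (a n) (b n) + 1 := by rw [min_add_add_right]
  have hmax : Filter.Tendsto (fun n : ℕ => max (min (a n) (b n) + 1) 0 / n) atTop (nhds ρ) := by
    have h1 : Filter.Tendsto (fun n : ℕ => (min (a n) (b n) + 1) / n) atTop (nhds ρ) := by
      have := hmin.add hinv
      rw [add_zero] at this
      refine this.congr fun n => ?_
      rw [← add_div]
    have h2 := h1.max (tendsto_const_nhds (x := (0:ℝ)))
    rw [max_eq_left hρpos.le] at h2
    refine h2.congr fun n => ?_
    have h3 := max_div_div_right (show (0:ℝ) ≤ (n:ℝ) from Nat.cast_nonneg n)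
      (min (a n) (b n) + 1) 0
    rw [zero_div] at h3
    exact h3
  refine tendsto_of_tendsto_of_tendsto_of_le_of_le' hmin hmax ?_ ?_
  · filter_upwards [Filter.eventually_ge_atTop 1] with n hn
    have hn' : (0:ℝ) < n := by exact_mod_cast Nat.lt_of_lt_of_le Nat.zero_lt_one hn
    exact (div_le_div_iff_of_pos_right hn').mpr (low n)
  · filter_upwards [Filter.eventually_ge_atTop 1] with n hn
    have hn' : (0:ℝ) < n := by exact_mod_cast Nat.lt_of_lt_of_le Nat.zero_lt_one hn
    exact (div_le_div_iff_of_pos_right hn').mpr (high n)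

lemma AK.main (q : ℕ) [NeZero q] (hq : 3 ≤ q) (δ ρ : ℝ) (h0 : 0 < δ) (h1 : δ < 1)
    (hρdef : ρ = min (δ/2) ((1-δ)/((q:ℝ)-2)))
    (D R M : ℕ → ℕ)
    (hMdef : ∀ n, M n = n - D n + 2 * R n)
    (hDle : ∀ n, D n ≤ n)
    (h2R : ∀ n, 2 * R n ≤ D n)
    (hD : Filter.Tendsto (fun n : ℕ => ((D n : ℕ):ℝ)/n) atTop (nhds δ))
    (hR : Filter.Tendsto (fun n : ℕ => ((R n : ℕ):ℝ)/n) atTop (nhds ρ)) :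
    Filter.Tendsto
      (fun n : ℕ => Real.logb q ((ballCard q (M n) (R n) * q ^ (D n - 2 * R n) : ℕ)) / n)
      atTop (nhds (betaFn q δ)) := by
  have hq1 : (1:ℝ) < q := by exact_mod_cast (by omega : 1 < q)
  have hq3 : (3:ℝ) ≤ q := by exact_mod_cast hq
  have hq2 : (0:ℝ) < (q:ℝ) - 2 := by linarith
  have hρpos : 0 < ρ := by
    rw [hρdef]; exact lt_min (by linarith) (div_pos (by linarith) hq2)
  have hρδ2 : ρ ≤ δ/2 := hρdef ▸ min_le_left _ _
  have hμpos : 0 < 1 - δ + 2*ρ := by linarith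
  have hνpos : 0 < 1 - δ + ρ := by linarith
  -- basic nat facts
  have hRM : ∀ n, R n ≤ M n := fun n => by rw [hMdef]; omega
  have hqR : ∀ n, R n ≤ (q-1) * (M n - R n) := by
    intro n
    have h1' : R n ≤ M n - R n := by rw [hMdef]; have := h2R n; have := hDle n; omega
    calc R n ≤ M n - R n := h1'
      _ = 1 * (M n - R n) := (one_mul _).symm
      _ ≤ (q-1) * (M n - R n) := Nat.mul_le_mul_right _ (by omega)
  -- auxiliary limits
  have hinv : Filter.Tendsto (fun n : ℕ => (1:ℝ)/n) atTop (nhds 0) :=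
    tendsto_one_div_atTop_nhds_zero_nat
  have hnn : Filter.Tendsto (fun n : ℕ => (n:ℝ)/n) atTop (nhds 1) := by
    refine Filter.Tendsto.congr' ?_ tendsto_const_nhds
    filter_upwards [Filter.eventually_ge_atTop 1] with n hn
    have : (n:ℝ) ≠ 0 := by
      have : (1:ℝ) ≤ n := by exact_mod_cast hn
      linarith
    rw [div_self this]
  have hM : Filter.Tendsto (fun n : ℕ => ((M n : ℕ):ℝ)/n) atTop (nhds (1 - δ + 2*ρ)) := by
    have h := (hnn.sub hD).add (hR.const_mul 2)
    refine h.congr fun n => ?_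
    have e : ((M n : ℕ):ℝ) = (n:ℝ) - D n + 2 * R n := by
      rw [hMdef]
      push_cast [Nat.cast_sub (hDle n)]
      ring
    rw [e]
    ring
  have hMR : Filter.Tendsto (fun n : ℕ => ((M n - R n : ℕ):ℝ)/n) atTop (nhds (1 - δ + ρ)) := by
    have h := (hnn.sub hD).add hR
    refine h.congr fun n => ?_
    have e : ((M n - R n : ℕ):ℝ) = (n:ℝ) - D n + R n := by
      have e2 : M n - R n = n - D n + R n := by rw [hMdef]; have := hDle n; omega
      rw [e2]
      push_cast [Nat.cast_sub (hDle n)]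
      ring
    rw [e]
    ring
  have hDR : Filter.Tendsto (fun n : ℕ => ((D n - 2 * R n : ℕ):ℝ)/n) atTop (nhds (δ - 2*ρ)) := by
    have h := hD.sub (hR.const_mul 2)
    refine h.congr fun n => ?_
    have e : ((D n - 2 * R n : ℕ):ℝ) = (D n:ℝ) - 2 * R n := by
      push_cast [Nat.cast_sub (h2R n)]
      ring
    rw [e]
    ring
  -- eventual facts
  have evR : ∀ᶠ n in atTop, 1 ≤ R n := by
    filter_upwards [hR.eventually (eventually_gt_nhds hρpos)] with n hn
    by_contra hcon
    push_neg at hcon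
    have : R n = 0 := by omega
    rw [this] at hn
    simp at hn
  have evMR : ∀ᶠ n in atTop, 1 ≤ M n - R n := by
    filter_upwards [hMR.eventually (eventually_gt_nhds hνpos)] with n hn
    by_contra hcon
    push_neg at hcon
    have : M n - R n = 0 := by omega
    rw [this] at hn
    simp at hn
  have evn : ∀ᶠ n in atTop, 1 ≤ n := Filter.eventually_ge_atTop 1
  have hlogM : Filter.Tendsto (fun n : ℕ => Real.logb q ((M n:ℝ) + 1)/n) atTop (nhds 0) := by
    have h := AK.tendsto_logb_div_of_le q hq1 (fun n => M n + 1)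
      (Filter.Eventually.of_forall fun n => Nat.le_add_left 1 (M n))
      (by filter_upwards [evn] with n hn
          have := h2R n; have := hDle n
          rw [hMdef]; omega)
    refine h.congr fun n => ?_
    push_cast
    ring_nf
  have hlogR : Filter.Tendsto (fun n : ℕ => Real.logb q ((R n:ℝ) + 1)/n) atTop (nhds 0) := by
    have h := AK.tendsto_logb_div_of_le q hq1 (fun n => R n + 1)
      (Filter.Eventually.of_forall fun n => Nat.le_add_left 1 (R n))
      (by filter_upwards [evn] with n hn
          have := h2R n; have := hDle n
          omega)
    refine h.congr fun n => ?_
    push_cast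
    ring_nf
  -- the approximating sequence
  set G : ℕ → ℝ := fun n => ((R n:ℝ)/n) * Real.logb q ((q:ℝ)-1)
    + ((M n:ℝ)/n) * Real.logb q ((M n:ℝ)/n) - ((R n:ℝ)/n) * Real.logb q ((R n:ℝ)/n)
    - (((M n - R n : ℕ):ℝ)/n) * Real.logb q (((M n - R n : ℕ):ℝ)/n)
    + ((D n - 2 * R n : ℕ):ℝ)/n with hGdef
  have hGlim : Filter.Tendsto G atTop (nhds (ρ * Real.logb q ((q:ℝ)-1)
      + (1-δ+2*ρ) * Real.logb q (1-δ+2*ρ) - ρ * Real.logb q ρ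
      - (1-δ+ρ) * Real.logb q (1-δ+ρ) + (δ - 2*ρ))) := by
    exact ((((hR.mul_const _).add (hM.mul (AK.tendsto_logb_comp (q:ℝ) hM hμpos))).sub
      (hR.mul (AK.tendsto_logb_comp (q:ℝ) hR hρpos))).sub
      (hMR.mul (AK.tendsto_logb_comp (q:ℝ) hMR hνpos))).add hDR
  rw [AK.beta_eq q hq δ h0 h1 ρ (1-δ+2*ρ) (1-δ+ρ) hρdef rfl rfl]
  have hlow := hGlim.sub hlogM
  rw [sub_zero] at hlow
  have hup := hGlim.add hlogR
  rw [add_zero] at hup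
  have key : ∀ n : ℕ, 1 ≤ R n → 1 ≤ M n - R n → 1 ≤ n →
      G n - Real.logb q ((M n:ℝ)+1)/n
        ≤ Real.logb q ((ballCard q (M n) (R n) * q ^ (D n - 2 * R n) : ℕ)) / n
      ∧ Real.logb q ((ballCard q (M n) (R n) * q ^ (D n - 2 * R n) : ℕ)) / n
        ≤ G n + Real.logb q ((R n:ℝ)+1)/n := by
    intro n hR1 hMR1 hn1
    have hn0 : (0:ℝ) < n := by exact_mod_cast Nat.lt_of_lt_of_le Nat.zero_lt_one hn1
    have hnne : (n:ℝ) ≠ 0 := ne_of_gt hn0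
    have hRc : (1:ℝ) ≤ ((R n : ℕ):ℝ) := by exact_mod_cast hR1
    have hMc : (1:ℝ) ≤ ((M n : ℕ):ℝ) := by exact_mod_cast hR1.trans (hRM n)
    have hXc : (1:ℝ) ≤ ((M n - R n : ℕ):ℝ) := by exact_mod_cast hMR1
    have hMne : ((M n : ℕ):ℝ) ≠ 0 := by linarith
    have hRne : ((R n : ℕ):ℝ) ≠ 0 := by linarith
    have hXne : ((M n - R n : ℕ):ℝ) ≠ 0 := by linarith
    have hBpos : (0:ℝ) < ((ballCard q (M n) (R n) : ℕ):ℝ) := by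
      have := AK.ballCard_one_le q (M n) (R n)
      exact_mod_cast Nat.lt_of_lt_of_le Nat.zero_lt_one this
    have hqne : ((q:ℕ):ℝ) ≠ 0 := Nat.cast_ne_zero.2 (by omega)
    obtain ⟨hb1, hb2⟩ := AK.logb_ball_bounds q (M n) (R n) hq (hRM n) hR1 hMR1 (hqR n)
    have hMRcast : ((M n - R n : ℕ):ℝ) = ((M n : ℕ):ℝ) - ((R n : ℕ):ℝ) := by
      push_cast [Nat.cast_sub (hRM n)]
      ring
    rw [← hMRcast] at hb1 hb2
    have hAK : Real.logb q ((ballCard q (M n) (R n) * q ^ (D n - 2 * R n) : ℕ):ℝ)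
        = Real.logb q ((ballCard q (M n) (R n) : ℕ):ℝ) + ((D n - 2 * R n : ℕ):ℝ) := by
      push_cast
      rw [Real.logb_mul (ne_of_gt hBpos) (pow_ne_zero _ hqne), Real.logb_pow,
        Real.logb_self_eq_one hq1, mul_one]
    have eM : Real.logb q ((M n : ℕ):ℝ)
        = Real.logb q (((M n : ℕ):ℝ)/n) + Real.logb q (n:ℝ) := by
      rw [← Real.logb_mul (div_ne_zero hMne hnne) hnne, div_mul_cancel₀ _ hnne]
    have eR : Real.logb q ((R n : ℕ):ℝ)
        = Real.logb q (((R n : ℕ):ℝ)/n) + Real.logb q (n:ℝ) := by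
      rw [← Real.logb_mul (div_ne_zero hRne hnne) hnne, div_mul_cancel₀ _ hnne]
    have eX : Real.logb q ((M n - R n : ℕ):ℝ)
        = Real.logb q (((M n - R n : ℕ):ℝ)/n) + Real.logb q (n:ℝ) := by
      rw [← Real.logb_mul (div_ne_zero hXne hnne) hnne, div_mul_cancel₀ _ hnne]
    have hsum : ((M n : ℕ):ℝ) = ((R n : ℕ):ℝ) + ((M n - R n : ℕ):ℝ) := by
      push_cast [Nat.cast_sub (hRM n)]
      ring
    have hGn : G n = (((R n : ℕ):ℝ) * Real.logb q ((q:ℝ)-1)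
        + ((M n : ℕ):ℝ) * Real.logb q ((M n : ℕ):ℝ)
        - ((R n : ℕ):ℝ) * Real.logb q ((R n : ℕ):ℝ)
        - ((M n - R n : ℕ):ℝ) * Real.logb q ((M n - R n : ℕ):ℝ)
        + ((D n - 2 * R n : ℕ):ℝ)) / n := by
      simp only [hGdef]
      rw [eM, eR, eX]
      have hXn : ((M n - R n : ℕ):ℝ) = ((M n : ℕ):ℝ) - ((R n : ℕ):ℝ) := hMRcast
      field_simp
      linear_combination (-(Real.logb (q:ℝ) (n:ℝ))) * hsum
    constructor
    · rw [hAK, hGn, ← sub_div]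
      refine (div_le_div_iff_of_pos_right hn0).mpr ?_
      linarith [hb1]
    · rw [hAK, hGn, ← add_div]
      refine (div_le_div_iff_of_pos_right hn0).mpr ?_
      linarith [hb2]
  refine tendsto_of_tendsto_of_tendsto_of_le_of_le' hlow hup ?_ ?_
  · filter_upwards [evR, evMR, evn] with n h1' h2' h3'
    exact (key n h1' h2' h3').1
  · filter_upwards [evR, evMR, evn] with n h1' h2' h3'
    exact (key n h1' h2' h3').2

theorem stmt10 (q : ℕ) [NeZero q] (hq : 3 ≤ q) (δ : ℝ) (hδ : δ ∈ Set.Icc (0 : ℝ) 1) :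
    Filter.Tendsto
      (fun n : ℕ => Real.logb q (AKAnticodeCard q ⌊δ * n⌋₊ n) / n)
      Filter.atTop (nhds (betaFn q δ)) := by
  obtain ⟨hδ0, hδ1⟩ := hδ
  have hq1 : (1:ℝ) < q := by exact_mod_cast (by omega : 1 < q)
  have hq3r : (3:ℝ) ≤ q := by exact_mod_cast hq
  rcases eq_or_lt_of_le hδ0 with h0 | hδpos
  · -- the case δ = 0
    have hrdn : ∀ n : ℕ, rdn q 0 n = 0 := by
      intro n
      rw [rdn, Int.toNat_eq_zero]
      refine min_le_of_left_le ?_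
      refine Int.ceil_le.2 ?_
      push_cast
      norm_num
    have hAK : ∀ n : ℕ, AKAnticodeCard q 0 n = 1 := by
      intro n
      rw [AKAnticodeCard, hrdn]
      simp [AK.ballCard_zero]
    have hfun : (fun n : ℕ => Real.logb q (AKAnticodeCard q ⌊δ * n⌋₊ n) / n)
        = fun _ => (0:ℝ) := by
      funext n
      rw [← h0, zero_mul, Nat.floor_zero, hAK]
      simp
    rw [hfun, ← h0]
    have hβ : betaFn q 0 = 0 := by
      rw [betaFn, if_pos (by positivity : (0:ℝ) ≤ 2/(q:ℝ))]
      simp [qEntropy]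
    rw [hβ]
    exact tendsto_const_nhds
  rcases eq_or_lt_of_le hδ1 with h1 | hδlt
  · -- the case δ = 1
    subst h1
    have hq3Q : (3:ℚ) ≤ q := by exact_mod_cast hq
    have hrdn : ∀ n : ℕ, rdn q n n = 0 := by
      intro n
      rw [rdn, Int.toNat_eq_zero]
      refine min_le_of_right_le ?_
      refine Int.ceil_le.2 ?_
      push_cast
      have e : ((n:ℚ) - n - q + 1) = 1 - q := by ring
      rw [e]
      apply div_nonpos_of_nonpos_of_nonneg <;> linarith
    have hβ : betaFn q 1 = 1 := by
      rw [betaFn, if_neg, sub_self, zero_mul, sub_zero]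
      rw [not_le, div_lt_one (by linarith : (0:ℝ) < q)]
      linarith
    rw [hβ]
    refine Filter.Tendsto.congr' ?_ tendsto_const_nhds
    filter_upwards [Filter.eventually_ge_atTop 1] with n hn
    have hne : (n:ℝ) ≠ 0 := by
      have : (1:ℝ) ≤ n := by exact_mod_cast hn
      linarith
    rw [one_mul, Nat.floor_natCast, AKAnticodeCard, hrdn]
    simp only [mul_zero, add_zero, Nat.sub_self, Nat.sub_zero, AK.ballCard_zero, one_mul]
    rw [show ((q ^ n : ℕ):ℝ) = (q:ℝ)^n by push_cast; ring, Real.logb_pow,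
      Real.logb_self_eq_one hq1, mul_one, div_self hne]
  · -- the main case 0 < δ < 1
    simp only [AKAnticodeCard]
    exact AK.main q hq δ (min (δ/2) ((1-δ)/((q:ℝ)-2))) hδpos hδlt rfl
      (fun n => ⌊δ * n⌋₊) (fun n => rdn q ⌊δ * n⌋₊ n)
      (fun n => n - ⌊δ * n⌋₊ + 2 * rdn q ⌊δ * n⌋₊ n)
      (fun _ => rfl)
      (fun n => by
        have h := Nat.floor_mono (mul_le_of_le_one_left (Nat.cast_nonneg (α := ℝ) n) hδ1)
        simpa using h)
      (fun n => AK.rdn_two_mul_le q _ n)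
      ((tendsto_nat_floor_mul_div_atTop hδ0).comp tendsto_natCast_atTop_atTop)
      (AK.rdn_div_tendsto q hq δ hδpos hδlt)
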